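/- If in addition p is continuous with compact support, then the smoothed density p_k is differentiable at every x ∈ E and its gradient is given by differentiation under the integral sign: gradient p_k x = −(1/k^2) • ∫ (p a * φ_k (x − a)) • (x − a) ∂a (Bochner integral with respect to Lebesgue measure on E). -/

import Mathlib

open MeasureTheory InnerProductSpace

set_option synthInstance.maxHeartbeats 1000000
set_option maxHeartbeats 1000000

lemma gauss_exp_mul_le (k t : ℝ) (hk : 0 < k) (ht : 0 ≤ t) :
    Real.exp (-t ^ 2 / (2 * k ^ 2)) * t ≤ 1 + 2 * k ^ 2 := by
  have hk2 : (0:ℝ) < 2 * k ^ 2 := by positivity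
  have hexple : Real.exp (-t ^ 2 / (2 * k ^ 2)) ≤ 1 := by
    rw [Real.exp_le_one_iff]
    have h0 : (0:ℝ) ≤ t ^ 2 / (2 * k ^ 2) := by positivity
    rw [neg_div]; linarith
  rcases le_or_gt t (1 + 2 * k ^ 2) with h | h
  · calc Real.exp (-t ^ 2 / (2 * k ^ 2)) * t ≤ 1 * t := by
          exact mul_le_mul_of_nonneg_right hexple ht
      _ = t := one_mul t
      _ ≤ _ := h
  · have ht1 : (1:ℝ) ≤ t := by nlinarith
    have hexp : t ^ 2 / (2 * k ^ 2) ≤ Real.exp (t ^ 2 / (2 * k ^ 2)) := by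
      have := Real.add_one_le_exp (t ^ 2 / (2 * k ^ 2))
      linarith
    have hle : t ≤ 2 * k ^ 2 * Real.exp (t ^ 2 / (2 * k ^ 2)) := by
      have h1 : t ≤ t ^ 2 := by nlinarith
      have h2 : t ^ 2 = 2 * k ^ 2 * (t ^ 2 / (2 * k ^ 2)) := by field_simp
      nlinarith
    have hmul : Real.exp (-t ^ 2 / (2 * k ^ 2)) * Real.exp (t ^ 2 / (2 * k ^ 2)) = 1 := by
      rw [← Real.exp_add]; simp [neg_div]
    have hpos : (0:ℝ) < Real.exp (-t ^ 2 / (2 * k ^ 2)) := Real.exp_pos _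
    nlinarith [mul_le_mul_of_nonneg_left hle hpos.le]

lemma gaussian_hasFDerivAt {E : Type*} [NormedAddCommGroup E] [InnerProductSpace ℝ E]
    (c k : ℝ) (hk : 0 < k) (y : E) :
    HasFDerivAt (fun t : E => c * Real.exp (-‖t‖ ^ 2 / (2 * k ^ 2)))
      ((-(1 / k ^ 2) * (c * Real.exp (-‖y‖ ^ 2 / (2 * k ^ 2)))) • (innerSL ℝ y)) y := by
  have h1 := (hasFDerivAt_id y).inner ℝ (hasFDerivAt_id y)
  have h2 := ((h1.const_mul (-(1 / (2 * k ^ 2)))).exp).const_mul c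
  simp only [id_eq] at h2
  have hfun : (fun t : E => c * Real.exp (-(1 / (2 * k ^ 2)) * (inner ℝ t t : ℝ)))
      = fun t : E => c * Real.exp (-‖t‖ ^ 2 / (2 * k ^ 2)) := by
    funext t
    rw [real_inner_self_eq_norm_sq]
    congr 1
    ring
  rw [hfun] at h2
  refine h2.congr_fderiv ?_
  ext v
  simp only [ContinuousLinearMap.smul_apply, ContinuousLinearMap.coe_comp',
    Function.comp_apply, ContinuousLinearMap.prod_apply, ContinuousLinearMap.coe_id', id_eq,
    fderivInnerCLM_apply, innerSL_apply_apply, smul_eq_mul, real_inner_self_eq_norm_sq]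
  rw [real_inner_comm v y, show (-(1 / (2 * k ^ 2)) * ‖y‖ ^ 2 : ℝ) = -‖y‖ ^ 2 / (2 * k ^ 2) by
    ring]
  ring

/-- Differentiation under the integral sign for the Gaussian-smoothed density: if the
probability density `p` is continuous with compact support, then the smoothed density
`p_k(x) = ∫ p a * φ_k (x − a) ∂a` is differentiable at every `x` and
`∇ p_k x = −(1/k²) • ∫ (p a * φ_k (x − a)) • (x − a) ∂a`. -/
theorem gradient_gaussian_smoothed_density
    (n : ℕ) (hn : 0 < n) (k : ℝ) (hk : 0 < k)
    (φ : EuclideanSpace ℝ (Fin n) → ℝ)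
    (hφ : ∀ x, φ x = (2 * Real.pi * k ^ 2) ^ (-(n : ℝ) / 2) *
        Real.exp (-‖x‖ ^ 2 / (2 * k ^ 2)))
    (p : EuclideanSpace ℝ (Fin n) → ℝ)
    (hpmeas : Measurable p) (hpnonneg : ∀ a, 0 ≤ p a) (hpint : ∫ a, p a = 1)
    (hpcont : Continuous p) (hpsupp : HasCompactSupport p)
    (pk : EuclideanSpace ℝ (Fin n) → ℝ)
    (hpk : ∀ x, pk x = ∫ a, p a * φ (x - a)) :
    ∀ x : EuclideanSpace ℝ (Fin n),
      DifferentiableAt ℝ pk x ∧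
      gradient pk x = -(1 / k ^ 2) • ∫ a, (p a * φ (x - a)) • (x - a) := by
  intro x
  have hk2 : (0:ℝ) < k ^ 2 := by positivity
  set c : ℝ := (2 * Real.pi * k ^ 2) ^ (-(n : ℝ) / 2) with hc
  have hc0 : 0 < c := Real.rpow_pos_of_pos (by positivity) _
  have hφeq : φ = fun t => c * Real.exp (-‖t‖ ^ 2 / (2 * k ^ 2)) := funext hφ
  have hφcont : Continuous φ := by rw [hφeq]; fun_prop
  have hφpos : ∀ y, 0 < φ y := fun y => by rw [hφ]; positivity
  -- derivative of φ
  have hφd : ∀ y, HasFDerivAt φ ((-(1 / k ^ 2) * φ y) • (innerSL ℝ y)) y := by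
    rw [hφeq]
    exact fun y => gaussian_hasFDerivAt c k hk y
  set F' : EuclideanSpace ℝ (Fin n) → EuclideanSpace ℝ (Fin n) →
      EuclideanSpace ℝ (Fin n) →L[ℝ] ℝ :=
    fun z a => (-(1 / k ^ 2) * (p a * φ (z - a))) • (innerSL ℝ (z - a)) with hF'
  have hdiff : ∀ a z, HasFDerivAt (fun z => p a * φ (z - a)) (F' z a) z := by
    intro a z
    have hsub : HasFDerivAt (fun z : EuclideanSpace ℝ (Fin n) => z - a)
        (ContinuousLinearMap.id ℝ _) z := (hasFDerivAt_id z).sub_const a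
    have h := ((hφd (z - a)).comp z hsub).const_mul (p a)
    refine h.congr_fderiv ?_
    ext v
    simp only [hF', ContinuousLinearMap.smul_apply, innerSL_apply_apply,
      ContinuousLinearMap.coe_comp', Function.comp_apply, ContinuousLinearMap.coe_id', id_eq,
      smul_eq_mul]
    ring
  -- the bound
  have hbound : ∀ a z, ‖F' z a‖ ≤ (k ^ 2)⁻¹ * (c * (1 + 2 * k ^ 2)) * p a := by
    intro a z
    have hφnn : (0:ℝ) ≤ φ (z - a) := (hφpos _).le
    have h1 : ‖F' z a‖ = (1 / k ^ 2) * (p a * φ (z - a)) * ‖z - a‖ := by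
      simp only [hF']
      have hns : ‖(-(1 / k ^ 2) * (p a * φ (z - a))) • (innerSL ℝ) (z - a)‖
          = ‖(-(1 / k ^ 2) * (p a * φ (z - a)))‖ * ‖(innerSL ℝ) (z - a)‖ :=
        norm_smul (-(1 / k ^ 2) * (p a * φ (z - a))) ((innerSL ℝ) (z - a))
      rw [hns, Real.norm_eq_abs, innerSL_apply_norm, abs_mul, abs_neg,
        abs_of_nonneg (by positivity : (0:ℝ) ≤ 1 / k ^ 2),
        abs_of_nonneg (mul_nonneg (hpnonneg a) hφnn)]
    have key : φ (z - a) * ‖z - a‖ ≤ c * (1 + 2 * k ^ 2) := by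
      rw [hφ, mul_assoc]
      exact mul_le_mul_of_nonneg_left
        (gauss_exp_mul_le k ‖z - a‖ hk (norm_nonneg _)) hc0.le
    have h2 : p a * (φ (z - a) * ‖z - a‖) ≤ p a * (c * (1 + 2 * k ^ 2)) :=
      mul_le_mul_of_nonneg_left key (hpnonneg a)
    rw [h1]
    calc (1 / k ^ 2) * (p a * φ (z - a)) * ‖z - a‖
        = (k ^ 2)⁻¹ * (p a * (φ (z - a) * ‖z - a‖)) := by ring
      _ ≤ (k ^ 2)⁻¹ * (p a * (c * (1 + 2 * k ^ 2))) :=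
          mul_le_mul_of_nonneg_left h2 (by positivity)
      _ = (k ^ 2)⁻¹ * (c * (1 + 2 * k ^ 2)) * p a := by ring
  -- integrability
  have hpint' : Integrable p := hpcont.integrable_of_hasCompactSupport hpsupp
  have hboundint : Integrable (fun a => (k ^ 2)⁻¹ * (c * (1 + 2 * k ^ 2)) * p a) :=
    hpint'.const_mul _
  have hFint : Integrable (fun a => p a * φ (x - a)) := by
    apply Continuous.integrable_of_hasCompactSupport
    · fun_prop
    · exact hpsupp.mul_right
  have hgint : Integrable (fun a : EuclideanSpace ℝ (Fin n) =>
      (p a * φ (x - a)) • (x - a)) := by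
    apply Continuous.integrable_of_hasCompactSupport
    · fun_prop
    · exact HasCompactSupport.smul_right hpsupp.mul_right
  have hF'cont : Continuous fun a => F' x a := by
    simp only [hF']
    exact ((continuous_const.mul (hpcont.mul
      (hφcont.comp (continuous_const.sub continuous_id)))).smul
      ((innerSL ℝ).continuous.comp (continuous_const.sub continuous_id)))
  -- differentiation under the integral sign
  have key := hasFDerivAt_integral_of_dominated_of_fderiv_le (μ := volume)
    (F := fun z a => p a * φ (z - a)) (F' := F') (x₀ := x)
    (bound := fun a => (k ^ 2)⁻¹ * (c * (1 + 2 * k ^ 2)) * p a) Filter.univ_mem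
    (Filter.Eventually.of_forall fun z =>
      ((hpcont.mul (hφcont.comp (continuous_const.sub continuous_id))).aestronglyMeasurable))
    hFint hF'cont.aestronglyMeasurable
    (Filter.Eventually.of_forall fun a z _ => hbound a z)
    hboundint
    (Filter.Eventually.of_forall fun a z _ => hdiff a z)
  have hpk' : pk = fun z => ∫ a, p a * φ (z - a) := funext hpk
  rw [← hpk'] at key
  -- identify the derivative with the gradient
  have hF'toDual : ∀ a, F' x a =
      toDualMap ℝ _ ((-(1 / k ^ 2) * (p a * φ (x - a))) • (x - a)) := by
    intro a
    ext v
    simp only [hF', ContinuousLinearMap.smul_apply, innerSL_apply_apply, smul_eq_mul,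
      toDualMap_apply_apply, real_inner_smul_left]
  have hInt : (∫ a, F' x a) =
      toDualMap ℝ _ (-(1 / k ^ 2) • ∫ a, (p a * φ (x - a)) • (x - a)) := by
    simp_rw [hF'toDual]
    rw [(toDualMap ℝ (EuclideanSpace ℝ (Fin n))).integral_comp_comm]
    congr 1
    simp_rw [mul_smul]
    rw [integral_smul]
  rw [hInt] at key
  have hgrad : HasGradientAt pk
      (-(1 / k ^ 2) • ∫ a, (p a * φ (x - a)) • (x - a)) x := by
    rw [hasGradientAt_iff_hasFDerivAt]
    have hdual : toDual ℝ (EuclideanSpace ℝ (Fin n))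
        (-(1 / k ^ 2) • ∫ a, (p a * φ (x - a)) • (x - a)) =
        toDualMap ℝ (EuclideanSpace ℝ (Fin n))
        (-(1 / k ^ 2) • ∫ a, (p a * φ (x - a)) • (x - a)) := by
      ext v
      simp [toDual_apply_apply, toDualMap_apply_apply]
    rw [hdual]
    exact key
  exact ⟨hgrad.differentiableAt, hgrad.gradient⟩
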